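/- In the setting of lying women with no liar worse-off: if w is a rejecter, then N(B(w)) is also a rejecter, and during the original run w rejected N(w) on a strictly later night than the night on which N(B(w)) rejected B(w). -/

import Mathlib

namespace GS

/-- The `k` most-preferred elements of `S` according to the rank function `rank`
(lower rank = more preferred); if `S` has at most `k` elements this is all of `S`. -/
def topk {α : Type*} [DecidableEq α] (rank : α → ℕ) (k : ℕ) (S : Finset α) : Finset α :=
  S.filter fun a => (S.filter fun b => rank b < rank a).card < k

/-- An instance of the stable-matching problem with `n` women and `n` men.
`mpref m w` is the rank man `m` assigns to woman `w` (lower = more preferred),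
and `wpref w m` is the rank woman `w` assigns to man `m`. -/
structure Instance (n : ℕ) where
  mpref : Fin n → Fin n → ℕ
  wpref : Fin n → Fin n → ℕ
  mprefInj : ∀ m, Function.Injective (mpref m)
  wprefInj : ∀ w, Function.Injective (wpref w)

variable {n : ℕ}

/-- `prefers p a b` : `a` is strictly preferred to `b` under rank function `p`. -/
def prefers (p : Fin n → ℕ) (a b : Fin n) : Prop := p a < p b

/-- Given the current state `avail m` (the women who have not yet rejected man `m`),
the set of women man `m` proposes to tonight: his most-preferred available woman
(a singleton, or empty if no woman is available). -/
def proposals (I : Instance n) (avail : Fin n → Finset (Fin n)) (m : Fin n) :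
    Finset (Fin n) := topk (I.mpref m) 1 (avail m)

/-- The men proposing to woman `w` tonight. -/
def proposersOf (I : Instance n) (avail : Fin n → Finset (Fin n)) (w : Fin n) :
    Finset (Fin n) := Finset.univ.filter fun m => w ∈ proposals I avail m

/-- The men rejected by woman `w` tonight: all of tonight's proposers except
her most-preferred one. -/
def rejectedBy (I : Instance n) (avail : Fin n → Finset (Fin n)) (w : Fin n) :
    Finset (Fin n) := proposersOf I avail w \ topk (I.wpref w) 1 (proposersOf I avail w)

/-- One night of the men-proposing Gale-Shapley algorithm. -/
def step (I : Instance n) (avail : Fin n → Finset (Fin n)) :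
    Fin n → Finset (Fin n) :=
  fun m => (avail m).filter fun w => m ∉ rejectedBy I avail w

/-- `nights I t m` : the set of women who have not rejected man `m` before night `t`
(initially all women). -/
def nights (I : Instance n) (t : ℕ) : Fin n → Finset (Fin n) :=
  (step I)^[t] (fun _ => Finset.univ)

/-- The algorithm has terminated by night `T`: no man is rejected on night `T`. -/
def Stopped (I : Instance n) (T : ℕ) : Prop := step I (nights I T) = nights I T

/-- On night `T`, each man `m` serenades exactly under the window of `μ m`. -/
def MatchesAt (I : Instance n) (T : ℕ) (μ : Fin n ≃ Fin n) : Prop :=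
  ∀ m, proposals I (nights I T) m = {μ m}

/-- The bijection `μ` (from men to women) is the outcome of the men-proposing
Gale-Shapley algorithm on instance `I`: for some night `T` no rejection occurs and
every man `m` is matched with `μ m`. -/
def IsGSMatching (I : Instance n) (μ : Fin n ≃ Fin n) : Prop :=
  ∃ T, Stopped I T ∧ MatchesAt I T μ

/-- Stability of a matching `μ` (men to women): there is no unmatched pair `(w, m)`
each of whom strictly prefers the other to their partner under `μ`. -/
def Stable (I : Instance n) (μ : Fin n ≃ Fin n) : Prop :=
  ¬ ∃ m w, μ m ≠ w ∧ I.mpref m w < I.mpref m (μ m) ∧ I.wpref w m < I.wpref w (μ.symm w)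

/-- The instance in which the women in `L` replace their true preferences by the
false preference rankings `f`, everyone else being truthful. -/
def liarInstance (I : Instance n) (L : Finset (Fin n))
    (f : Fin n → Fin n → ℕ) (hf : ∀ w, Function.Injective (f w)) : Instance n where
  mpref := I.mpref
  wpref := fun w => if w ∈ L then f w else I.wpref w
  mprefInj := I.mprefInj
  wprefInj := fun w => by split_ifs; exacts [hf w, I.wprefInj w]

end GS

namespace GS

variable {n : ℕ}

lemma mem_topk_one {α} [DecidableEq α] {rank : α → ℕ} {S : Finset α} {a : α} :
    a ∈ topk rank 1 S ↔ a ∈ S ∧ ∀ b ∈ S, ¬ rank b < rank a := by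
  simp [topk, Nat.lt_one_iff, Finset.card_eq_zero, Finset.filter_eq_empty_iff]

lemma topk_one_nonempty {α} [DecidableEq α] {rank : α → ℕ} {S : Finset α}
    (hS : S.Nonempty) : (topk rank 1 S).Nonempty := by
  obtain ⟨a, ha, hmin⟩ := S.exists_min_image rank hS
  exact ⟨a, mem_topk_one.2 ⟨ha, fun b hb => not_lt.2 (hmin b hb)⟩⟩

lemma nights_succ (I : Instance n) (t : ℕ) :
    nights I (t + 1) = step I (nights I t) :=
  Function.iterate_succ_apply' _ _ _

lemma nights_succ_subset (I : Instance n) (t : ℕ) (m : Fin n) :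
    nights I (t + 1) m ⊆ nights I t m := by
  rw [nights_succ]; exact Finset.filter_subset _ _

lemma mem_proposersOf {I : Instance n} {avail : Fin n → Finset (Fin n)} {w m : Fin n} :
    m ∈ proposersOf I avail w ↔ w ∈ proposals I avail m := by
  simp [proposersOf]

lemma rejectedBy_subset (I : Instance n) (avail : Fin n → Finset (Fin n)) (w : Fin n) :
    rejectedBy I avail w ⊆ proposersOf I avail w :=
  Finset.sdiff_subset

/-- A proposer who is not rejected is the woman's most-preferred proposer. -/
lemma kept_top {I : Instance n} {avail : Fin n → Finset (Fin n)} {w b : Fin n}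
    (hb : b ∈ proposersOf I avail w) (hbk : b ∉ rejectedBy I avail w) :
    ∀ m ∈ proposersOf I avail w, ¬ I.wpref w m < I.wpref w b := by
  have : b ∈ topk (I.wpref w) 1 (proposersOf I avail w) := by
    by_contra h
    exact hbk (Finset.mem_sdiff.2 ⟨hb, h⟩)
  exact (mem_topk_one.1 this).2

/-- If a man proposes to `w` tonight without being rejected, then on every later
night `w` has a proposer she likes at least as much, who again is not rejected. -/
lemma held_persists (I : Instance n) (w : Fin n) {t : ℕ} {b : Fin n}
    (hb : b ∈ proposersOf I (nights I t) w)
    (hbk : b ∉ rejectedBy I (nights I t) w) :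
    ∀ t', t ≤ t' → ∃ b', b' ∈ proposersOf I (nights I t') w ∧
      b' ∉ rejectedBy I (nights I t') w ∧ I.wpref w b' ≤ I.wpref w b := by
  intro t' ht'
  induction t' , ht' using Nat.le_induction with
  | base => exact ⟨b, hb, hbk, le_rfl⟩
  | succ t' ht' ih =>
    obtain ⟨c, hc, hck, hcle⟩ := ih
    have hcprop : w ∈ proposals I (nights I t') c := mem_proposersOf.1 hc
    have hcav : w ∈ nights I t' c ∧ ∀ x ∈ nights I t' c,
        ¬ I.mpref c x < I.mpref c w := mem_topk_one.1 hcprop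
    have hcprop' : c ∈ proposersOf I (nights I (t' + 1)) w := by
      refine mem_proposersOf.2 (mem_topk_one.2 ⟨?_, ?_⟩)
      · rw [nights_succ]
        exact Finset.mem_filter.2 ⟨hcav.1, hck⟩
      · intro x hx
        exact hcav.2 x (nights_succ_subset I t' c hx)
    by_cases hrc : c ∈ rejectedBy I (nights I (t' + 1)) w
    · obtain ⟨d, hd⟩ := topk_one_nonempty (rank := I.wpref w)
        (S := proposersOf I (nights I (t' + 1)) w) ⟨c, hcprop'⟩
      have hd' := mem_topk_one.1 hd
      refine ⟨d, hd'.1, fun hcon => ?_, le_trans (not_lt.1 (hd'.2 c hcprop')) hcle⟩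
      exact (Finset.mem_sdiff.1 hcon).2 hd
    · exact ⟨c, hcprop', hrc, hcle⟩

/-- If `x` is no longer available to `m`, she rejected him on some earlier night. -/
lemma exists_rejection (I : Instance n) (m x : Fin n) :
    ∀ t, x ∉ nights I t m → ∃ s < t, m ∈ rejectedBy I (nights I s) x := by
  intro t
  induction t with
  | zero => intro h; exact absurd (Finset.mem_univ x) h
  | succ t ih =>
    intro h
    by_cases hx : x ∈ nights I t m
    · refine ⟨t, Nat.lt_succ_self _, ?_⟩
      rw [nights_succ] at h
      by_contra hcon
      exact h (Finset.mem_filter.2 ⟨hx, hcon⟩)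
    · obtain ⟨s, hs, hr⟩ := ih hx
      exact ⟨s, hs.trans (Nat.lt_succ_self _), hr⟩

/-- At a matching night, `w`'s unique proposer is her partner. -/
lemma proposer_at_match {I : Instance n} {T : ℕ} {μ : Fin n ≃ Fin n}
    (hμ : MatchesAt I T μ) {w m : Fin n}
    (hm : m ∈ proposersOf I (nights I T) w) : m = μ.symm w := by
  have := mem_proposersOf.1 hm
  rw [hμ m, Finset.mem_singleton] at this
  rw [this, Equiv.symm_apply_apply]

/-- The Gale–Shapley outcome is stable. -/
lemma gs_stable (I : Instance n) (μ : Fin n ≃ Fin n) (h : IsGSMatching I μ) :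
    Stable I μ := by
  obtain ⟨T, _, hmatch⟩ := h
  rintro ⟨m, w, hne, hm, hw⟩
  have hμm : μ m ∈ proposals I (nights I T) m := by
    rw [hmatch m]; exact Finset.mem_singleton_self _
  have hμm' := mem_topk_one.1 hμm
  have hwT : w ∉ nights I T m := fun hw' => hμm'.2 w hw' hm
  obtain ⟨s, hsT, hrs⟩ := exists_rejection I m w T hwT
  have hmprop : m ∈ proposersOf I (nights I s) w := rejectedBy_subset I _ w hrs
  obtain ⟨c, hc⟩ := topk_one_nonempty (rank := I.wpref w)
    (S := proposersOf I (nights I s) w) ⟨m, hmprop⟩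
  have hc' := mem_topk_one.1 hc
  have hck : c ∉ rejectedBy I (nights I s) w := fun hcon =>
    (Finset.mem_sdiff.1 hcon).2 hc
  have hclt : I.wpref w c < I.wpref w m := by
    rcases lt_or_eq_of_le (not_lt.1 (hc'.2 m hmprop)) with h' | h'
    · exact h'
    · exact absurd (I.wprefInj w h') (fun hcm => hck (hcm ▸ hrs))
  obtain ⟨d, hd, _, hdle⟩ := held_persists I w hc'.1 hck T hsT.le
  have : d = μ.symm w := proposer_at_match hmatch hd
  exact absurd hw (not_lt.2 (this ▸ (hdle.trans hclt.le)))

end GS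

open GS in
/-- In the setting of lying women with no liar worse-off: if woman `w` rejected her
new partner `N(w)` on night `t` of the original run and `b = B(w)` is a man who
proposed to `w` that night without being rejected, then the woman `N(b)` is also a
rejecter, having rejected her own new partner `b` on a strictly earlier night. -/
theorem order_lemma (n : ℕ) (I : GS.Instance n)
    (L : Finset (Fin n)) (f : Fin n → Fin n → ℕ) (hf : ∀ w, Function.Injective (f w))
    (T : ℕ) (hT : Stopped I T) (O : Fin n ≃ Fin n) (hO : MatchesAt I T O)
    (N : Fin n ≃ Fin n) (hN : IsGSMatching (liarInstance I L f hf) N)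
    (hliars : ∀ w ∈ L, ¬ prefers (I.wpref w) (O.symm w) (N.symm w))
    (w b : Fin n) (t : ℕ) (ht : t ≤ T)
    (hrej : N.symm w ∈ rejectedBy I (nights I t) w)
    (hb : b ∈ proposersOf I (nights I t) w)
    (hbkept : b ∉ rejectedBy I (nights I t) w) :
    ∃ s < t, b ∈ rejectedBy I (nights I s) (N b) := by
  have hNprop : N.symm w ∈ proposersOf I (nights I t) w := rejectedBy_subset I _ w hrej
  have hbne : b ≠ N.symm w := fun h => hbkept (h ▸ hrej)
  -- w strictly prefers b to N.symm w (true preferences)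
  have hbN : I.wpref w b < I.wpref w (N.symm w) := by
    rcases lt_or_eq_of_le (not_lt.1 (kept_top hb hbkept (N.symm w) hNprop)) with h | h
    · exact h
    · exact absurd (I.wprefInj w h) hbne
  -- w's OA partner is at least as good as b
  have hOb : I.wpref w (O.symm w) ≤ I.wpref w b := by
    obtain ⟨d, hd, _, hdle⟩ := held_persists I w hb hbkept T ht
    have : d = O.symm w := proposer_at_match hO hd
    exact this ▸ hdle
  -- hence w prefers her OA partner to her NA partner, so w is truthful
  have hwL : w ∉ L := fun hwL =>
    hliars w hwL (lt_of_le_of_lt hOb hbN)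
  -- N b ≠ w
  have hNbw : N b ≠ w := fun h => hbne (by rw [← h, Equiv.symm_apply_apply])
  -- stability of N in the liar instance gives: b prefers N b to w
  have hstab := gs_stable _ N hN
  have hmlt : I.mpref b (N b) < I.mpref b w := by
    rcases lt_or_ge (I.mpref b (N b)) (I.mpref b w) with h | h
    · exact h
    · exfalso
      apply hstab
      refine ⟨b, w, hNbw, ?_, ?_⟩
      · show I.mpref b w < I.mpref b (N b)
        rcases lt_or_eq_of_le h with h' | h'
        · exact h'
        · exact absurd (I.mprefInj b h'.symm) hNbw
      · show (liarInstance I L f hf).wpref w b <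
            (liarInstance I L f hf).wpref w (N.symm w)
        simp only [liarInstance, if_neg hwL]
        exact hbN
  -- since b proposed to w on night t, N b was already unavailable to b
  have hbw : w ∈ proposals I (nights I t) b := mem_proposersOf.1 hb
  have hbw' := mem_topk_one.1 hbw
  have hNbav : N b ∉ nights I t b := fun h => hbw'.2 (N b) h hmlt
  exact exists_rejection I b (N b) t hNbav
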